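/- For each integer s ≥ 2, the Cayley digraph Γ_s = Cay(R_s, {a_s b_s, b_s}), where a_s = (2s−1,2s)(4s−1,4s), b_s = (1,3,5,…,4s−1,2,4,6,…,4s) ∈ Sym(4s) and R_s = ⟨a_s, b_s⟩, is isomorphic to the coset digraph Cos(G,H,HgH) where G = ⟨h,g⟩ with h = (1,2), g = (1,3,…,4s−1)(2,4,…,4s), and H = ⟨h, h^g, …, h^{g^{s−1}}⟩. -/

import Mathlib

namespace St10

abbrev V (m : ℕ) := ZMod m → ZMod 2

lemma z2 (a : ZMod 2) : a + a = 0 := CharTwo.add_self_eq_zero a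

lemma vadd_self {m : ℕ} (v : V m) : v + v = 0 := funext fun i => z2 _

def sh {m : ℕ} (k : ZMod m) (v : V m) : V m := fun i => v (i - k)

@[simp] lemma sh_apply {m : ℕ} (k : ZMod m) (v : V m) (i : ZMod m) : sh k v i = v (i - k) := rfl

lemma sh_zero {m : ℕ} (v : V m) : sh 0 v = v := funext fun i => by simp

lemma sh_sh {m : ℕ} (k k' : ZMod m) (v : V m) : sh k (sh k' v) = sh (k + k') v :=
  funext fun i => by simp [sub_sub]

lemma sh_add {m : ℕ} (k : ZMod m) (v w : V m) : sh k (v + w) = sh k v + sh k w := rfl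

lemma sh_zerov {m : ℕ} (k : ZMod m) : sh k (0 : V m) = 0 := rfl

@[ext] structure W (m : ℕ) where
  v : V m
  k : ZMod m

namespace W

variable {m : ℕ}

instance : Mul (W m) := ⟨fun x y => ⟨x.v + sh x.k y.v, x.k + y.k⟩⟩
instance : One (W m) := ⟨⟨0, 0⟩⟩
instance : Inv (W m) := ⟨fun x => ⟨sh (-x.k) x.v, -x.k⟩⟩

@[simp] lemma mul_v (x y : W m) : (x * y).v = x.v + sh x.k y.v := rfl
@[simp] lemma mul_k (x y : W m) : (x * y).k = x.k + y.k := rfl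
@[simp] lemma one_v : (1 : W m).v = 0 := rfl
@[simp] lemma one_k : (1 : W m).k = 0 := rfl
@[simp] lemma inv_v (x : W m) : (x⁻¹).v = sh (-x.k) x.v := rfl
@[simp] lemma inv_k (x : W m) : (x⁻¹).k = -x.k := rfl

instance : Group (W m) where
  mul_assoc x y z := by
    ext i
    · simp [sh_add, ← sh_sh]; abel
    · simp [add_assoc]
  one_mul x := by ext i <;> simp [sh_zerov, sh_zero]
  mul_one x := by ext i <;> simp [sh_zerov]
  inv_mul_cancel x := by
    ext i
    · simp [sh_sh, Pi.add_apply, z2]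
    · simp

def δ (i : ZMod m) : V m := fun j => if j = i then 1 else 0

lemma sh_δ (k i : ZMod m) : sh k (δ i) = δ (i + k) :=
  funext fun j => by simp [δ, sub_eq_iff_eq_add]

lemma conj_mk0 (x : W m) (w : V m) : x * ⟨w, 0⟩ * x⁻¹ = ⟨sh x.k w, 0⟩ := by
  ext i
  · simp [sh_add, sh_sh, Pi.add_apply]
    rw [add_comm (x.v _), add_assoc, add_comm (x.v _), ← add_assoc, add_assoc, z2, add_zero]
  · simp

lemma conj_mk0' (x : W m) (w : V m) : x⁻¹ * ⟨w, 0⟩ * x = ⟨sh (-x.k) w, 0⟩ := by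
  have := conj_mk0 x⁻¹ w
  rwa [inv_inv, inv_k] at this

lemma pow_k (x : W m) (t : ℕ) : (x ^ t).k = (t : ZMod m) * x.k := by
  induction t with
  | zero => simp
  | succ n ih => rw [pow_succ]; push_cast; simp [ih]; ring

end W

end St10
namespace St10
open W

section S
variable {s : ℕ}

local notation "M" => ZMod (2*s)

def X (s : ℕ) (k : ZMod (2*s)) : V (2*s) := fun i => if i.val < k.val then 1 else 0

@[simp] lemma δ_apply {m : ℕ} (i j : ZMod m) : δ i j = if j = i then 1 else 0 := rfl

def per (s : ℕ) (w : V (2*s)) : Prop := ∀ i : ZMod (2*s), w (i + (s : ZMod (2*s))) = w i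

lemma nz (hs : 2 ≤ s) : NeZero (2*s) := ⟨by omega⟩

lemma sps (hs : 2 ≤ s) : (s : M) + (s : M) = 0 := by
  have h := ZMod.natCast_self (2*s)
  have h2 : ((2*s : ℕ) : M) = (s:M) + (s:M) := by push_cast; ring
  rw [h2] at h; exact h

lemma neg_s (hs : 2 ≤ s) : -(s : M) = (s : M) :=
  neg_eq_of_add_eq_zero_left (sps hs)

lemma val_s (hs : 2 ≤ s) : (s : M).val = s := by
  haveI := nz hs
  exact ZMod.val_cast_of_lt (by omega)

lemma val_mod (hs : 2 ≤ s) (x y : M) :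
    (x + y).val = if x.val + y.val < 2*s then x.val + y.val else x.val + y.val - 2*s := by
  haveI := nz hs
  have hx : x.val < 2*s := ZMod.val_lt _
  have hy : y.val < 2*s := ZMod.val_lt _
  rw [ZMod.val_add]
  split_ifs with hc
  · exact Nat.mod_eq_of_lt hc
  · have h3 : x.val + y.val = (x.val + y.val - 2*s) + 2*s := by omega
    conv_lhs => rw [h3]
    rw [Nat.add_mod_right]
    exact Nat.mod_eq_of_lt (by omega)

lemma val_sub' (hs : 2 ≤ s) (x y : M) :
    (x - y).val = if x.val < y.val then x.val + 2*s - y.val else x.val - y.val := by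
  haveI := nz hs
  have hx : x.val < 2*s := ZMod.val_lt _
  have hy : y.val < 2*s := ZMod.val_lt _
  have hcast : x - y = ((x.val + (2*s - y.val) : ℕ) : M) := by
    have h2s : ((2*s : ℕ) : M) = 0 := ZMod.natCast_self _
    have e1 : ((x.val : ℕ) : M) = x := ZMod.natCast_rightInverse x
    have e2 : ((y.val : ℕ) : M) = y := ZMod.natCast_rightInverse y
    rw [Nat.cast_add, Nat.cast_sub hy.le, h2s, e1, e2]
    ring
  rw [hcast, ZMod.val_natCast]
  split_ifs with hc
  · rw [Nat.mod_eq_of_lt (by omega)]; omega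
  · have h3 : x.val + (2*s - y.val) = (x.val - y.val) + 2*s := by omega
    rw [h3, Nat.add_mod_right, Nat.mod_eq_of_lt (by omega)]

lemma key1 (hs : 2 ≤ s) (k₁ k₂ i : M) :
    X s (k₁ + k₂) i = X s k₁ i + X s k₂ (i - k₁) +
      (if k₁.val + k₂.val < 2*s then 0 else 1) := by
  haveI := nz hs
  have hal : k₁.val < 2*s := ZMod.val_lt _
  have hbl : k₂.val < 2*s := ZMod.val_lt _
  have hjl : i.val < 2*s := ZMod.val_lt _
  simp only [X, val_mod hs, val_sub' hs]
  split_ifs <;> first | rfl | decide | omega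

lemma key2 (hs : 2 ≤ s) (k i : M) :
    X s (-k) i = X s k (i + k) + (if k = 0 then 0 else 1) := by
  haveI := nz hs
  have hal : k.val < 2*s := ZMod.val_lt _
  have hjl : i.val < 2*s := ZMod.val_lt _
  have hk0' : k.val = 0 → k = 0 := fun hk => by rwa [ZMod.val_eq_zero] at hk
  have hk0 : k = 0 → k.val = 0 := fun hk => by rw [hk, ZMod.val_zero]
  simp only [X, val_mod hs, ZMod.neg_val]
  split_ifs <;> first | rfl | decide | omega | (exfalso; simp_all)

lemma X_zero (hs : 2 ≤ s) : X s (0 : M) = 0 := by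
  haveI := nz hs
  funext i
  simp [X]

lemma X_one (hs : 2 ≤ s) : X s (1 : M) = δ 0 := by
  haveI := nz hs
  haveI : Fact (1 < 2*s) := ⟨by omega⟩
  funext i
  simp only [X, δ, ZMod.val_one]
  by_cases hi : i = 0
  · simp [hi]
  · rw [if_neg hi, if_neg]
    intro hc
    exact hi (by rwa [Nat.lt_one_iff, ZMod.val_eq_zero] at hc)

lemma per_sh {w : V (2*s)} (k : M) (hw : per s w) : per s (sh k w) := by
  intro i
  simp only [sh_apply]
  have h1 : i + (s:M) - k = (i - k) + (s:M) := by ring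
  rw [h1, hw]

end S

def K₁ (s : ℕ) : Subgroup (W (2*s)) where
  carrier := {x | x.k = 0 ∧ ∀ i : ZMod (2*s), s ≤ i.val → x.v i = 0}
  mul_mem' := by
    rintro x y ⟨hx0, hx⟩ ⟨hy0, hy⟩
    refine ⟨by simp [hx0, hy0], fun i hi => ?_⟩
    simp [hx0, sh_zero, Pi.add_apply, hx i hi, hy i hi]
  one_mem' := ⟨rfl, fun i _ => rfl⟩
  inv_mem' := by
    rintro x ⟨hx0, hx⟩
    refine ⟨by simp [hx0], fun i hi => ?_⟩
    simp only [inv_v, hx0, neg_zero, sh_zero]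
    exact hx i hi

def R₀ (s : ℕ) (hs : 2 ≤ s) : Subgroup (W (2*s)) where
  carrier := {x | per s (x.v + X s x.k)}
  mul_mem' := by
    rintro x y px py
    simp only [Set.mem_setOf_eq] at px py ⊢
    intro i
    simp only [Pi.add_apply, mul_v, mul_k, sh_apply]
    rw [key1 hs x.k y.k (i + (s : ZMod (2*s))), key1 hs x.k y.k i]
    have h1 : i + (s : ZMod (2*s)) - x.k = (i - x.k) + (s : ZMod (2*s)) := by ring
    rw [h1]
    have px' := px i
    have py' := py (i - x.k)
    simp only [Pi.add_apply] at px' py'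
    linear_combination px' + py'
  one_mem' := by
    simp only [Set.mem_setOf_eq]
    intro i
    simp only [Pi.add_apply, one_v, one_k, X_zero hs]
    simp
  inv_mem' := by
    rintro x px
    simp only [Set.mem_setOf_eq] at px ⊢
    intro i
    simp only [Pi.add_apply, inv_v, inv_k, sh_apply]
    rw [key2 hs x.k (i + (s : ZMod (2*s))), key2 hs x.k i]
    have h1 : i + (s : ZMod (2*s)) + x.k = (i + x.k) + (s : ZMod (2*s)) := by ring
    have h2 : i + (s : ZMod (2*s)) - -x.k = (i + x.k) + (s : ZMod (2*s)) := by ring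
    have h3 : i - -x.k = i + x.k := by ring
    rw [h2, h3, h1]
    have px' := px (i + x.k)
    simp only [Pi.add_apply] at px'
    linear_combination px'

end St10
namespace St10
open W

variable {s : ℕ}

def E0 (s : ℕ) (hs : 2 ≤ s) : Fin (4*s) ≃ ZMod (2*s) × ZMod 2 where
  toFun x := ((((x : ℕ)/2 : ℕ) : ZMod (2*s)), (((x : ℕ) : ℕ) : ZMod 2))
  invFun p := ⟨2 * p.1.val + p.2.val, by
    haveI := nz hs
    have h1 : p.1.val < 2*s := ZMod.val_lt _
    have h2 : p.2.val < 2 := ZMod.val_lt _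
    omega⟩
  left_inv x := by
    haveI := nz hs
    apply Fin.ext
    simp only [ZMod.val_natCast]
    have hx : (x : ℕ) < 4*s := x.isLt
    have h1 : (x : ℕ)/2 < 2*s := by omega
    rw [Nat.mod_eq_of_lt h1]
    omega
  right_inv p := by
    haveI := nz hs
    have h2 : p.2.val < 2 := ZMod.val_lt _
    apply Prod.ext
    · simp only
      have h1 : (2 * p.1.val + p.2.val)/2 = p.1.val := by omega
      rw [h1]
      exact ZMod.natCast_rightInverse p.1
    · simp only
      have : ((2 * p.1.val + p.2.val : ℕ) : ZMod 2) = ((p.2.val : ℕ) : ZMod 2) := by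
        push_cast
        rw [show (2 : ZMod 2) = 0 from rfl]
        ring
      rw [this]
      exact ZMod.natCast_rightInverse p.2

def τ (s : ℕ) (x : W (2*s)) : Equiv.Perm (ZMod (2*s) × ZMod 2) where
  toFun p := (p.1 + x.k, p.2 + x.v (p.1 + x.k))
  invFun p := (p.1 - x.k, p.2 + x.v p.1)
  left_inv p := by
    apply Prod.ext
    · simp
    · simp only [add_sub_cancel_right]
      rw [add_assoc, z2, add_zero]
  right_inv p := by
    apply Prod.ext
    · simp
    · simp only [sub_add_cancel]
      rw [add_assoc, z2, add_zero]

@[simp] lemma τ_apply (x : W (2*s)) (p : ZMod (2*s) × ZMod 2) :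
    τ s x p = (p.1 + x.k, p.2 + x.v (p.1 + x.k)) := rfl

lemma τ_mul (x y : W (2*s)) : τ s (x * y) = τ s x * τ s y := by
  apply Equiv.ext
  intro p
  rw [Equiv.Perm.mul_apply]
  simp only [τ_apply, mul_k, mul_v, Pi.add_apply, sh_apply]
  have e1 : p.1 + (x.k + y.k) = p.1 + y.k + x.k := by ring
  have e2 : p.1 + y.k + x.k - x.k = p.1 + y.k := by ring
  apply Prod.ext
  · simp only; rw [e1]
  · simp only
    rw [e1, e2]
    ring

def Φ (s : ℕ) (hs : 2 ≤ s) : W (2*s) →* Equiv.Perm (Fin (4*s)) :=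
  MonoidHom.mk' (fun x => ((E0 s hs).trans (τ s x)).trans (E0 s hs).symm)
    (by
      intro x y
      apply Equiv.ext
      intro q
      simp [τ_mul, Equiv.Perm.mul_apply])

lemma Φ_apply (hs : 2 ≤ s) (x : W (2*s)) (q : Fin (4*s)) :
    Φ s hs x q = (E0 s hs).symm (τ s x (E0 s hs q)) := rfl

lemma Φ_inj (hs : 2 ≤ s) : Function.Injective (Φ s hs) := by
  intro x y hxy
  have hτ : ∀ p, τ s x p = τ s y p := by
    intro p
    have h := congrArg (fun (e : Equiv.Perm (Fin (4*s))) => e ((E0 s hs).symm p)) hxy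
    simp only [Φ_apply, Equiv.apply_symm_apply] at h
    exact (E0 s hs).symm.injective h
  have hk : x.k = y.k := by
    have := hτ (0, 0)
    have h1 := congrArg Prod.fst this
    simpa using h1
  ext j
  · have := hτ (j - x.k, 0)
    have h2 := congrArg Prod.snd this
    simp only [τ_apply, sub_add_cancel, zero_add] at h2
    rw [← hk] at h2
    simpa [sub_add_cancel] using h2
  · exact hk
end St10
namespace St10
open W

variable {s : ℕ}

local notation "M" => ZMod (2*s)

@[simp] lemma fin_mk_val (n a : ℕ) (h : a < n) : ((⟨a, h⟩ : Fin n) : ℕ) = a := rfl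

@[simp] lemma mk_v (v : V (2*s)) (k : M) : (W.mk v k).v = v := rfl
@[simp] lemma mk_k (v : V (2*s)) (k : M) : (W.mk v k).k = k := rfl

lemma Φ_val (hs : 2 ≤ s) (x : W (2*s)) (q : Fin (4*s)) :
    (Φ s hs x q : ℕ) = 2 * ((((q:ℕ)/2 : ℕ) : M) + x.k).val
      + (((q:ℕ) : ZMod 2) + x.v ((((q:ℕ)/2 : ℕ) : M) + x.k)).val := rfl

lemma val_natc (hs : 2 ≤ s) (t : ℕ) (ht : t < 2*s) : ((t : ℕ) : M).val = t := by
  haveI := nz hs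
  exact ZMod.val_cast_of_lt ht

lemma val2_flip (x : ℕ) : (((x:ℕ) : ZMod 2) + 1).val = (x + 1) % 2 := by
  have h1 : ((x : ℕ) : ZMod 2) + 1 = (((x + 1 : ℕ) : ℕ) : ZMod 2) := by push_cast; ring
  rw [h1, ZMod.val_natCast]

lemma val2_id (x : ℕ) : (((x:ℕ) : ZMod 2) + 0).val = x % 2 := by
  rw [add_zero, ZMod.val_natCast]

lemma id_h (hs : s ≥ 2) :
    Φ s hs ⟨δ 0, 0⟩ = Equiv.swap (⟨0, by omega⟩ : Fin (4*s)) ⟨1, by omega⟩ := by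
  haveI := nz hs
  apply Equiv.ext; intro x
  apply Fin.ext
  rw [Φ_val]
  simp only [mk_v, mk_k, add_zero]
  have hx4 : (x:ℕ) < 4*s := x.isLt
  have hvi : (((x:ℕ)/2 : ℕ) : M).val = (x:ℕ)/2 := val_natc hs _ (by omega)
  by_cases h0 : (x:ℕ)/2 = 0
  · have hz : (((x:ℕ)/2 : ℕ) : M) = 0 := by rw [h0]; exact Nat.cast_zero
    rw [hz, show δ (0 : M) 0 = 1 from if_pos rfl, ZMod.val_zero, val2_flip]
    rw [Equiv.swap_apply_def]
    simp only [apply_ite (Fin.val), fin_mk_val, Fin.ext_iff]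
    split_ifs <;> omega
  · have hne : (((x:ℕ)/2 : ℕ) : M) ≠ 0 := by
      intro hc
      have := congrArg ZMod.val hc
      rw [hvi, ZMod.val_zero] at this
      exact h0 this
    rw [show δ (0:M) (((x:ℕ)/2 : ℕ) : M) = 0 from if_neg hne, val2_id, hvi]
    rw [Equiv.swap_apply_def]
    simp only [apply_ite (Fin.val), fin_mk_val, Fin.ext_iff]
    split_ifs <;> omega

lemma id_g (hs : 2 ≤ s) (g : Equiv.Perm (Fin (4*s)))
    (hg : ∀ i : Fin (4 * s), (g i : ℕ) =
      if (i : ℕ) % 2 = 0 then (if (i : ℕ) = 4 * s - 2 then 0 else (i : ℕ) + 2)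
      else (if (i : ℕ) = 4 * s - 1 then 1 else (i : ℕ) + 2)) :
    Φ s hs ⟨0, 1⟩ = g := by
  haveI := nz hs
  haveI : Fact (1 < 2*s) := ⟨by omega⟩
  apply Equiv.ext; intro x
  apply Fin.ext
  rw [Φ_val, hg x]
  simp only [mk_v, mk_k, Pi.zero_apply, add_zero, ZMod.val_natCast]
  have hx4 : (x:ℕ) < 4*s := x.isLt
  rw [val_mod hs, val_natc hs _ (by omega), ZMod.val_one]
  split_ifs <;> omega

set_option maxHeartbeats 1000000 in
lemma id_a (hs : s ≥ 2) :
    Φ s hs ⟨δ ((s:M) - 1) + δ (-1), 0⟩ =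
      Equiv.swap (⟨2*s - 2, by omega⟩ : Fin (4*s)) ⟨2*s - 1, by omega⟩ *
      Equiv.swap (⟨4*s - 2, by omega⟩ : Fin (4*s)) ⟨4*s - 1, by omega⟩ := by
  haveI := nz hs
  apply Equiv.ext; intro x
  apply Fin.ext
  rw [Φ_val]
  simp only [mk_v, mk_k, add_zero, Pi.add_apply]
  rw [Equiv.Perm.mul_apply]
  have hx4 : (x:ℕ) < 4*s := x.isLt
  have hs1 : ((s:M) - 1) = (((s - 1 : ℕ) : ℕ) : M) := by
    push_cast [Nat.cast_sub (by omega : 1 ≤ s)]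
    ring
  have hm1 : (-1 : M) = (((2*s - 1 : ℕ) : ℕ) : M) := by
    have h2s : ((2*s : ℕ) : M) = 0 := ZMod.natCast_self _
    push_cast [Nat.cast_sub (by omega : 1 ≤ 2*s)] at h2s ⊢
    linear_combination -h2s
  have hval_s1 : ((s:M) - 1).val = s - 1 := by rw [hs1, val_natc hs _ (by omega)]
  have hval_m1 : (-1 : M).val = 2*s - 1 := by rw [hm1, val_natc hs _ (by omega)]
  have hvi : (((x:ℕ)/2 : ℕ) : M).val = (x:ℕ)/2 := val_natc hs _ (by omega)
  have hd1 : ((((x:ℕ)/2 : ℕ) : M) = (s:M) - 1) ↔ (x:ℕ)/2 = s - 1 := by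
    constructor
    · intro hc; have := congrArg ZMod.val hc; rwa [hvi, hval_s1] at this
    · intro hc; rw [hs1]; exact congrArg _ (by omega)
  have hd2 : ((((x:ℕ)/2 : ℕ) : M) = (-1:M)) ↔ (x:ℕ)/2 = 2*s - 1 := by
    constructor
    · intro hc; have := congrArg ZMod.val hc; rwa [hvi, hval_m1] at this
    · intro hc; rw [hm1]; exact congrArg _ (by omega)
  simp only [δ]
  by_cases c1 : (x:ℕ)/2 = s - 1
  · rw [if_pos (hd1.2 c1), if_neg (fun hc => by have := hd2.1 hc; omega)]
    rw [add_zero, val2_flip, hvi]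
    rw [Equiv.swap_apply_def, Equiv.swap_apply_def]
    simp only [apply_ite (Fin.val), fin_mk_val, Fin.ext_iff]
    split_ifs <;> omega
  · by_cases c2 : (x:ℕ)/2 = 2*s - 1
    · rw [if_neg (fun hc => by have := hd1.1 hc; omega), if_pos (hd2.2 c2)]
      rw [zero_add, val2_flip, hvi]
      rw [Equiv.swap_apply_def, Equiv.swap_apply_def]
      simp only [apply_ite (Fin.val), fin_mk_val, Fin.ext_iff]
      split_ifs <;> omega
    · rw [if_neg (fun hc => by have := hd1.1 hc; omega),
        if_neg (fun hc => by have := hd2.1 hc; omega)]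
      rw [add_zero, val2_id, hvi]
      rw [Equiv.swap_apply_def, Equiv.swap_apply_def]
      simp only [apply_ite (Fin.val), fin_mk_val, Fin.ext_iff]
      split_ifs <;> omega
end St10
namespace St10
open W Subgroup

variable {s : ℕ}

local notation "M" => ZMod (2*s)

def b0 (s : ℕ) : W (2*s) := ⟨δ 0, 1⟩
def a0 (s : ℕ) : W (2*s) := ⟨δ ((s:ZMod (2*s)) - 1) + δ (-1), 0⟩
def h0 (s : ℕ) : W (2*s) := ⟨δ 0, 0⟩
def g0 (s : ℕ) : W (2*s) := ⟨0, 1⟩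
def e0 (s : ℕ) (j : ZMod (2*s)) : W (2*s) := ⟨δ j, 0⟩
def S' (s : ℕ) : Set (W (2*s)) := Set.range (fun i : Fin s => e0 s ((i:ℕ) : ZMod (2*s)))
def K₀ (s : ℕ) : Subgroup (W (2*s)) := Subgroup.closure (S' s)
def R' (s : ℕ) : Subgroup (W (2*s)) := Subgroup.closure {a0 s, b0 s}
def RK (s : ℕ) : Set (W (2*s)) := {x | ∃ r ∈ R' s, ∃ u ∈ K₀ s, x = r * u}

lemma delta_shift (c j i : M) : δ j (i + c) = δ (j - c) i := by
  simp only [δ]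
  by_cases h : i + c = j
  · rw [if_pos h, if_pos (by rw [← h]; ring)]
  · rw [if_neg h, if_neg (fun hc => h (by rw [hc]; ring))]

lemma e0_inv (j : M) : (e0 s j)⁻¹ = e0 s j := by
  ext i
  · simp [e0, neg_zero, sh_zero]
  · simp [e0]

lemma mul_e0 (j j' : M) : e0 s j * e0 s j' = ⟨δ j + δ j', 0⟩ := by
  ext i
  · simp [e0, sh_zero]
  · simp [e0]

lemma conj_e0 (x : W (2*s)) (j : M) : x⁻¹ * e0 s j * x = e0 s (j - x.k) := by
  rw [show e0 s j = (⟨δ j, 0⟩ : W (2*s)) from rfl, conj_mk0' x (δ j)]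
  simp only [e0, sh_δ]
  rw [show j + -x.k = j - x.k from by ring]

lemma g0_pow (i : ℕ) : (g0 s) ^ i = ⟨0, (i : M)⟩ := by
  induction i with
  | zero => ext j <;> simp
  | succ n ih =>
    rw [pow_succ, ih]
    ext j
    · simp [g0, sh_zerov]
    · simp only [mul_k, mk_k]
      show (n : M) + (1 : M) = ((n+1 : ℕ) : M)
      push_cast
      ring

lemma b0_mem_R' : b0 s ∈ R' s := Subgroup.subset_closure (by simp)
lemma a0_mem_R' : a0 s ∈ R' s := Subgroup.subset_closure (by simp)

lemma aelt (hs : 2 ≤ s) (j : M) :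
    (⟨δ j + δ (j + (s:M)), 0⟩ : W (2*s)) ∈ R' s := by
  haveI := nz hs
  set t : ℕ := (j + 1 - (s:M)).val with ht
  have hk : ((b0 s) ^ t).k = j + 1 - (s:M) := by
    rw [pow_k]
    show (t : M) * (1 : M) = _
    rw [mul_one, ht]
    exact ZMod.natCast_rightInverse _
  have hc := conj_mk0 ((b0 s) ^ t) ((a0 s).v)
  rw [hk] at hc
  have hv : sh (j + 1 - (s:M)) ((a0 s).v) = δ j + δ (j + (s:M)) := by
    show sh (j + 1 - (s:M)) (δ ((s:M) - 1) + δ (-1)) = _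
    rw [sh_add, sh_δ, sh_δ]
    congr 1
    · congr 1; ring
    · congr 1
      have : (-1 : M) + (j + 1 - (s:M)) = j - (s:M) := by ring
      rw [this, sub_eq_add_neg, neg_s hs]
  rw [hv] at hc
  rw [← hc]
  show (b0 s)^t * (a0 s) * ((b0 s)^t)⁻¹ ∈ R' s
  exact mul_mem (mul_mem (pow_mem b0_mem_R' t) a0_mem_R') (inv_mem (pow_mem b0_mem_R' t))

lemma K0_le_K1 (hs : 2 ≤ s) : K₀ s ≤ K₁ s := by
  apply Subgroup.closure_le _ |>.2
  rintro x ⟨i, rfl⟩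
  refine ⟨rfl, fun jj hjj => ?_⟩
  show δ _ jj = 0
  rw [δ, if_neg]
  intro hc
  rw [hc, val_natc hs _ (by omega)] at hjj
  omega

lemma per_a0 (hs : 2 ≤ s) : per s ((a0 s).v) := by
  intro i
  show ((δ ((s:M) - 1) + δ (-1)) : V (2*s)) (i + (s:M)) = ((δ ((s:M) - 1) + δ (-1)) : V (2*s)) i
  rw [Pi.add_apply, Pi.add_apply, delta_shift, delta_shift]
  rw [show (s:M) - 1 - (s:M) = -1 from by ring]
  rw [show (-1 : M) - (s:M) = -1 + -(s:M) from by ring, neg_s hs,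
    show (-1 : M) + (s:M) = (s:M) - 1 from by ring]
  exact add_comm _ _

lemma R'_le_R0 (hs : 2 ≤ s) : R' s ≤ R₀ s hs := by
  apply Subgroup.closure_le _ |>.2
  rintro x hx
  rcases hx with rfl | rfl
  · show per s ((a0 s).v + X s (a0 s).k)
    rw [show (a0 s).k = 0 from rfl, X_zero hs, add_zero]
    exact per_a0 hs
  · show per s ((b0 s).v + X s (b0 s).k)
    rw [show (b0 s).k = 1 from rfl, X_one hs, show (b0 s).v = δ 0 from rfl, vadd_self]
    intro i; rfl

lemma R0_inter_K1 (hs : 2 ≤ s) (x : W (2*s)) (hx : x ∈ R₀ s hs) (hk : x ∈ K₁ s) :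
    x = 1 := by
  haveI := nz hs
  obtain ⟨hk0, hsupp⟩ := hk
  have px : per s (x.v) := by
    have := hx
    rw [show x ∈ R₀ s hs ↔ per s (x.v + X s x.k) from Iff.rfl] at this
    rwa [hk0, X_zero hs, add_zero] at this
  ext j
  · show x.v j = 0
    by_cases hj : s ≤ j.val
    · exact hsupp j hj
    · have h1 := px j
      have hval : (j + (s:M)).val = j.val + s := by
        rw [val_mod hs, val_s hs, if_pos (by omega)]
      have h2 : x.v (j + (s:M)) = 0 := hsupp _ (by omega)
      rw [h2] at h1
      exact h1.symm
  · show x.k = 0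
    exact hk0

end St10
namespace St10
open W Subgroup

variable {s : ℕ}

local notation "M" => ZMod (2*s)

lemma add_add_cancel (p q : V (2*s)) : p + (q + p) = q := by
  rw [add_comm q p, ← add_assoc, vadd_self, zero_add]

lemma b0a0 (hs : 2 ≤ s) : b0 s * a0 s = (⟨δ (s : M), 1⟩ : W (2*s)) := by
  ext i
  · show ((δ 0 + sh 1 ((δ ((s:M) - 1) + δ (-1)) : V (2*s))) : V (2*s)) i = δ (s:M) i
    rw [sh_add, sh_δ, sh_δ, show (s:M) - 1 + 1 = (s:M) from by ring,
      show (-1 : M) + 1 = 0 from by ring]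
    rw [add_add_cancel (δ 0) (δ (s:M))]
  · show (1 : M) + 0 = 1
    ring

lemma sprime_ne_zero (hs : 2 ≤ s) : (s : M) ≠ 0 := by
  haveI := nz hs
  intro hc
  have := congrArg ZMod.val hc
  rw [val_s hs, ZMod.val_zero] at this
  omega

lemma dc (hs : 2 ≤ s) (x : W (2*s)) (hx : x ∈ R₀ s hs) (u w : W (2*s))
    (hu : u ∈ K₁ s) (hw : w ∈ K₁ s) (hxuw : x = u * g0 s * w) :
    x = b0 s ∨ x = b0 s * a0 s := by
  haveI := nz hs
  haveI : Fact (1 < 2*s) := ⟨by omega⟩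
  obtain ⟨hu0, husupp⟩ := hu
  obtain ⟨hw0, hwsupp⟩ := hw
  have hxk : x.k = 1 := by
    rw [hxuw]; simp [g0, hu0, hw0]
  have hxv : ∀ i : M, x.v i = u.v i + w.v (i - 1) := by
    intro i
    rw [hxuw]
    simp only [mul_v, mul_k, Pi.add_apply, sh_apply, hu0, hw0, g0]
    rw [show (0 : M) + 1 = 1 from by ring]
    simp [sh_zero]
  have hper : per s ((x.v + δ 0 : V (2*s))) := by
    have h0 := hx
    rw [show x ∈ R₀ s hs ↔ per s (x.v + X s x.k) from Iff.rfl, hxk, X_one hs] at h0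
    exact h0
  have hval1 : (1 : M).val = 1 := ZMod.val_one _
  have claimA : ∀ i : M, s < i.val → ((x.v + δ 0 : V (2*s))) i = 0 := by
    intro i hi
    have hilt : i.val < 2*s := ZMod.val_lt _
    have hu' : u.v i = 0 := husupp i (by omega)
    have hsub : (i - 1).val = i.val - 1 := by
      rw [val_sub' hs, hval1, if_neg (by omega)]
    have hw' : w.v (i - 1) = 0 := hwsupp _ (by omega)
    have hne : i ≠ 0 := fun hc => by
      rw [hc, ZMod.val_zero] at hi; omega
    rw [Pi.add_apply, hxv, hu', hw', δ_apply, if_neg hne]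
    ring
  have claimB : ∀ i : M, 1 ≤ i.val → i.val < s → ((x.v + δ 0 : V (2*s))) i = 0 := by
    intro i h1 h2
    have hval : (i + (s:M)).val = i.val + s := by
      rw [val_mod hs, val_s hs, if_pos (by omega)]
    rw [← hper i]
    exact claimA _ (by omega)
  have hs'val : ((s:M)).val = s := val_s hs
  have hVs : ((x.v + δ 0 : V (2*s))) (s : M) = ((x.v + δ 0 : V (2*s))) 0 := by
    have := hper 0
    rwa [zero_add] at this
  have hother : ∀ j : M, j ≠ 0 → j ≠ (s:M) → ((x.v + δ 0 : V (2*s))) j = 0 := by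
    intro j hj0 hjs
    have hj0' : j.val ≠ 0 := fun hc => hj0 (by rwa [ZMod.val_eq_zero] at hc)
    have hjs' : j.val ≠ s := fun hc => by
      apply hjs
      have : ((j.val : ℕ) : M) = ((s : ℕ) : M) := by rw [hc]
      rwa [ZMod.natCast_rightInverse j] at this
    rcases Nat.lt_or_ge j.val s with hlt | hge
    · exact claimB j (by omega) hlt
    · exact claimA j (by omega)
  have hvj : ∀ j, x.v j = ((x.v + δ 0 : V (2*s))) j + δ 0 j := by
    intro j
    rw [Pi.add_apply, add_assoc, z2, add_zero]
  by_cases hV : ((x.v + δ 0 : V (2*s))) 0 = 0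
  · left
    ext j
    · show x.v j = δ 0 j
      rw [hvj]
      by_cases hj0 : j = 0
      · subst hj0; rw [hV, zero_add]
      · rw [δ_apply, if_neg hj0, add_zero]
        by_cases hjs : j = (s:M)
        · subst hjs; rw [hVs, hV]
        · rw [hother j hj0 hjs]
    · exact hxk
  · right
    have hV1 : ((x.v + δ 0 : V (2*s))) 0 = 1 := by
      have hd : ∀ a : ZMod 2, a ≠ 0 → a = 1 := by decide
      exact hd _ hV
    rw [b0a0 hs]
    ext j
    · show x.v j = δ (s:M) j
      rw [hvj]
      by_cases hj0 : j = 0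
      · subst hj0
        rw [hV1, δ_apply, if_pos rfl, δ_apply, if_neg (fun hc => sprime_ne_zero hs hc.symm)]
        decide
      · rw [δ_apply, if_neg hj0, add_zero]
        by_cases hjs : j = (s:M)
        · subst hjs
          rw [hVs, hV1, δ_apply, if_pos rfl]
        · rw [hother j hj0 hjs, δ_apply, if_neg hjs]
    · exact hxk

lemma e0_mem_K0 (hs : 2 ≤ s) (j : M) (hj : j.val < s) : e0 s j ∈ K₀ s := by
  haveI := nz hs
  apply Subgroup.subset_closure
  refine ⟨⟨j.val, hj⟩, ?_⟩
  simp only [e0]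
  congr 1
  exact (ZMod.natCast_rightInverse j).symm ▸ rfl

lemma swap_e0 (r : W (2*s)) (c : M) : e0 s c * r = r * e0 s (c - r.k) := by
  have := conj_e0 r c
  calc e0 s c * r = r * (r⁻¹ * e0 s c * r) := by group
    _ = r * e0 s (c - r.k) := by rw [this]

lemma e0_split (hs : 2 ≤ s) (j : M) :
    e0 s j = (⟨δ j + δ (j + (s:M)), 0⟩ : W (2*s)) * e0 s (j + (s:M)) := by
  ext i
  · show δ j i = (((δ j + δ (j + (s:M))) + sh 0 (δ (j + (s:M))) : V (2*s))) i
    rw [sh_zero]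
    simp only [Pi.add_apply]
    rw [add_assoc, z2, add_zero]
  · show (0 : M) = 0 + 0
    ring

lemma KR (hs : 2 ≤ s) : ∀ u ∈ K₀ s, ∀ x ∈ RK s, (u * x ∈ RK s ∧ u⁻¹ * x ∈ RK s) := by
  haveI := nz hs
  intro u hu
  induction hu using Subgroup.closure_induction with
  | mem u' hu' =>
    obtain ⟨i, rfl⟩ := hu'
    have main : ∀ x ∈ RK s, e0 s ((i:ℕ) : M) * x ∈ RK s := by
      rintro x ⟨r, hr, w', hw', rfl⟩
      rw [← mul_assoc, swap_e0 r]
      set j := ((i:ℕ) : M) - r.k with hj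
      by_cases hjs : j.val < s
      · exact ⟨r, hr, e0 s j * w', mul_mem (e0_mem_K0 hs j hjs) hw', by group⟩
      · have h1 : j.val < 2*s := ZMod.val_lt _
        have hjval : (j + (s:M)).val = j.val - s := by
          rw [val_mod hs, val_s hs, if_neg (by omega)]
          omega
        refine ⟨r * ⟨δ j + δ (j + (s:M)), 0⟩, mul_mem hr (aelt hs j),
          e0 s (j + (s:M)) * w', mul_mem (e0_mem_K0 hs _ (by rw [hjval]; omega)) hw', ?_⟩
        rw [e0_split hs j]
        group
    intro x hx
    constructor
    · exact main x hx
    · rw [e0_inv]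
      exact main x hx
  | one =>
    intro x hx
    refine ⟨?_, ?_⟩
    · rw [one_mul]; exact hx
    · rw [inv_one, one_mul]; exact hx
  | mul u₁ u₂ hu₁ hu₂ p₁ p₂ =>
    intro x hx
    constructor
    · have h2 := (p₂ x hx).1
      have h1 := (p₁ _ h2).1
      rwa [← mul_assoc] at h1
    · have h1 := (p₁ x hx).2
      have h2 := (p₂ _ h1).2
      rwa [← mul_assoc, ← mul_inv_rev] at h2
  | inv u' hu' p =>
    intro x hx
    exact ⟨(p x hx).2, by rw [inv_inv]; exact (p x hx).1⟩

lemma gen_RK (hs : 2 ≤ s) : ∀ x ∈ Subgroup.closure {h0 s, g0 s}, x ∈ RK s := by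
  haveI := nz hs
  intro x hx
  induction hx using Subgroup.closure_induction with
  | mem x' hx' =>
    rcases hx' with rfl | rfl
    · refine ⟨1, one_mem _, e0 s 0, ?_, (one_mul _).symm⟩
      exact e0_mem_K0 hs 0 (by rw [ZMod.val_zero]; omega)
    · refine ⟨b0 s * a0 s, mul_mem (b0_mem_R' ) (a0_mem_R'), e0 s ((s:M) - 1), ?_, ?_⟩
      · apply e0_mem_K0 hs
        have : ((s:M) - 1) = (((s - 1 : ℕ) : ℕ) : M) := by
          push_cast [Nat.cast_sub (by omega : 1 ≤ s)]; ring
        rw [this, val_natc hs _ (by omega)]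
        omega
      · rw [b0a0 hs]
        ext i
        · show (0 : V (2*s)) i = ((δ (s:M) + sh 1 (δ ((s:M) - 1)) : V (2*s))) i
          rw [sh_δ, show (s:M) - 1 + 1 = (s:M) from by ring, vadd_self]
        · show (1 : M) = 1 + 0
          ring
  | one => exact ⟨1, one_mem _, 1, one_mem _, by group⟩
  | mul x₁ x₂ hx₁ hx₂ p₁ p₂ =>
    obtain ⟨r₁, hr₁, u₁, hu₁, rfl⟩ := p₁
    have h2 := (KR hs u₁ hu₁ x₂ p₂).1
    obtain ⟨r₂, hr₂, u₂, hu₂, heq⟩ := h2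
    exact ⟨r₁ * r₂, mul_mem hr₁ hr₂, u₂, hu₂, by rw [mul_assoc, heq]; group⟩
  | inv x' hx' p =>
    obtain ⟨r, hr, u, hu, rfl⟩ := p
    have h1 : r⁻¹ ∈ RK s := ⟨r⁻¹, inv_mem hr, 1, one_mem _, by group⟩
    have h2 := (KR hs u hu r⁻¹ h1).2
    obtain ⟨r₂, hr₂, u₂, hu₂, heq⟩ := h2
    exact ⟨r₂, hr₂, u₂, hu₂, by rw [mul_inv_rev, heq]⟩

end St10
namespace St10
open W Subgroup

variable {s : ℕ}

local notation "M" => ZMod (2*s)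

lemma h0g0 : h0 s * g0 s = b0 s := by
  ext i
  · show (δ 0 + sh 0 (0 : V (2*s)) : V (2*s)) i = δ 0 i
    rw [sh_zerov, add_zero]
  · show (0 : M) + 1 = 1
    ring

lemma g0e0 (hs : 2 ≤ s) : g0 s * e0 s ((s:M) - 1) = b0 s * a0 s := by
  rw [b0a0 hs]
  ext i
  · show ((0 : V (2*s)) + sh 1 (δ ((s:M) - 1)) : V (2*s)) i = δ (s:M) i
    rw [sh_δ, show (s:M) - 1 + 1 = (s:M) from by ring, zero_add]
  · show (1 : M) + 0 = 1
    ring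

lemma conj_h0 (c : M) : (⟨0, c⟩ : W (2*s)) * h0 s * (⟨0, c⟩ : W (2*s))⁻¹ = e0 s c := by
  have hc := conj_mk0 (⟨0, c⟩ : W (2*s)) (δ 0)
  rw [show (⟨δ 0, 0⟩ : W (2*s)) = h0 s from rfl] at hc
  rw [hc]
  simp only [e0, mk_k, sh_δ, zero_add]

lemma e0_mem_hg (hs : 2 ≤ s) (j : M) : e0 s j ∈ Subgroup.closure {h0 s, g0 s} := by
  haveI := nz hs
  have h1 : (g0 s)^(j.val) * h0 s * ((g0 s)^(j.val))⁻¹ = e0 s j := by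
    rw [g0_pow, conj_h0, ZMod.natCast_rightInverse j]
  rw [← h1]
  have hh0 : h0 s ∈ Subgroup.closure {h0 s, g0 s} := subset_closure (by simp)
  have hg0 : g0 s ∈ Subgroup.closure {h0 s, g0 s} := subset_closure (by simp)
  exact mul_mem (mul_mem (pow_mem hg0 _) hh0) (inv_mem (pow_mem hg0 _))

lemma a0_eq_mul : a0 s = e0 s ((s:M) - 1) * e0 s (-1) := by
  rw [mul_e0]; rfl

lemma R'_le_hg (hs : 2 ≤ s) : R' s ≤ Subgroup.closure {h0 s, g0 s} := by
  apply Subgroup.closure_le _ |>.2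
  rintro x (rfl | rfl)
  · rw [a0_eq_mul]
    exact mul_mem (e0_mem_hg hs _) (e0_mem_hg hs _)
  · rw [← h0g0]
    exact mul_mem (subset_closure (by simp)) (subset_closure (by simp))

lemma val_s_sub_one (hs : 2 ≤ s) : ((s:M) - 1).val = s - 1 := by
  haveI := nz hs
  have : ((s:M) - 1) = (((s - 1 : ℕ) : ℕ) : M) := by
    push_cast [Nat.cast_sub (by omega : 1 ≤ s)]; ring
  rw [this, val_natc hs _ (by omega)]

end St10

open St10 St10.W Subgroup

/-- For each `s ≥ 2`, the Cayley digraph `Γ_s = Cay(R_s, {a_s b_s, b_s})`, where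
`a_s = (2s−1,2s)(4s−1,4s)`, `b_s = (1,3,5,…,4s−1,2,4,6,…,4s) = gh ∈ Sym(4s)` and
`R_s = ⟨a_s, b_s⟩`, is isomorphic to the coset digraph `Cos(G,H,HgH)` where `G = ⟨h,g⟩`
with `h = (1,2)`, `g = (1,3,…,4s−1)(2,4,…,4s)`, and `H = ⟨h, h^g, …, h^{g^{s−1}}⟩`.
The vertex set of `Cos(G,H,HgH)` is the set of right cosets of `H` in `G`, with
`Hx → Hy` iff `y x⁻¹ ∈ HgH`; in `Cay(R,S)` there is an arc `x → y` iff `y x⁻¹ ∈ S`.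

Here `Sym(4s)` is realized as `Equiv.Perm (Fin (4s))` with points `0,…,4s−1` corresponding
to `1,…,4s`. Since the paper composes permutations left-to-right while Mathlib's
`Equiv.Perm` composes right-to-left, products are reversed: the paper's
`h^{g^i} = g^{-i} h g^i` is `g^i * h * (g^i)⁻¹` here, `b = gh` is `h * g`, the paper's
right cosets `Hx` are Mathlib's left cosets (`↥G ⧸ H`), arcs `y x⁻¹ ∈ HgH` become
`x⁻¹ y ∈ HgH`, and arcs `y x⁻¹ ∈ {ab, b}` become `x⁻¹ y ∈ {ba, b}`. -/
theorem stmt10 (s : ℕ) (hs : 2 ≤ s)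
    (h g a : Equiv.Perm (Fin (4 * s)))
    (hh : h = Equiv.swap ⟨0, by omega⟩ ⟨1, by omega⟩)
    (hg : ∀ i : Fin (4 * s), (g i : ℕ) =
      if (i : ℕ) % 2 = 0 then (if (i : ℕ) = 4 * s - 2 then 0 else (i : ℕ) + 2)
      else (if (i : ℕ) = 4 * s - 1 then 1 else (i : ℕ) + 2))
    (ha : a = Equiv.swap ⟨2 * s - 2, by omega⟩ ⟨2 * s - 1, by omega⟩ *
      Equiv.swap ⟨4 * s - 2, by omega⟩ ⟨4 * s - 1, by omega⟩)
    (G : Subgroup (Equiv.Perm (Fin (4 * s)))) (hG : G = Subgroup.closure {h, g})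
    (H : Subgroup ↥G)
    (hH : H = (Subgroup.closure {x : Equiv.Perm (Fin (4 * s)) |
      ∃ i : Fin s, x = g ^ (i : ℕ) * h * (g ^ (i : ℕ))⁻¹}).subgroupOf G)
    (R : Subgroup (Equiv.Perm (Fin (4 * s)))) (hR : R = Subgroup.closure {a, h * g})
    (g' : ↥G) (hg' : (g' : Equiv.Perm (Fin (4 * s))) = g) :
    ∃ ψ : ↥R ≃ (↥G ⧸ H),
      ∀ r₁ r₂ : ↥R,
        ((r₁ : Equiv.Perm (Fin (4 * s)))⁻¹ * (r₂ : Equiv.Perm (Fin (4 * s))) =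
            (h * g) * a ∨
         (r₁ : Equiv.Perm (Fin (4 * s)))⁻¹ * (r₂ : Equiv.Perm (Fin (4 * s))) = h * g) ↔
        ∃ x y : ↥G,
          QuotientGroup.mk x = ψ r₁ ∧ QuotientGroup.mk y = ψ r₂ ∧
          ∃ h₁ ∈ H, ∃ h₂ ∈ H, x⁻¹ * y = h₁ * g' * h₂ := by
  haveI := St10.nz hs
  set M := ZMod (2*s)
  set Φ' := St10.Φ s hs with hΦ'def
  have hΦh : Φ' (h0 s) = h := by rw [hh]; exact id_h hs
  have hΦg : Φ' (g0 s) = g := id_g hs g hg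
  have hΦa : Φ' (a0 s) = a := by rw [ha]; exact id_a hs
  have hΦb : Φ' (b0 s) = h * g := by rw [← h0g0, map_mul, hΦh, hΦg]
  have hΦba : Φ' (b0 s * a0 s) = (h * g) * a := by rw [map_mul, hΦb, hΦa]
  have hG' : G = Subgroup.map Φ' (Subgroup.closure {h0 s, g0 s}) := by
    rw [hG, MonoidHom.map_closure, Set.image_pair, hΦh, hΦg]
  have hR2 : R = Subgroup.map Φ' (R' s) := by
    rw [hR, show R' s = Subgroup.closure {a0 s, b0 s} from rfl,
      MonoidHom.map_closure, Set.image_pair, hΦa, hΦb]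
  have epow : ∀ i : ℕ, g ^ i * h * (g ^ i)⁻¹ = Φ' (e0 s ((i : ℕ) : M)) := by
    intro i
    rw [← hΦg, ← hΦh, ← map_pow, ← map_inv, ← map_mul, ← map_mul, g0_pow, conj_h0]
  have hK : Subgroup.closure {x : Equiv.Perm (Fin (4 * s)) |
      ∃ i : Fin s, x = g ^ (i : ℕ) * h * (g ^ (i : ℕ))⁻¹}
      = Subgroup.map Φ' (K₀ s) := by
    rw [show K₀ s = Subgroup.closure (S' s) from rfl, MonoidHom.map_closure]
    congr 1
    ext x
    constructor
    · rintro ⟨i, rfl⟩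
      exact ⟨e0 s ((i:ℕ) : M), ⟨i, rfl⟩, (epow i).symm⟩
    · rintro ⟨y, ⟨i, rfl⟩, rfl⟩
      exact ⟨i, (epow i).symm⟩
  have hHK : H = (Subgroup.map Φ' (K₀ s)).subgroupOf G := by rw [hH, hK]
  have RleG : R ≤ G := by
    rw [hR2, hG']
    exact Subgroup.map_mono (R'_le_hg hs)
  let f : ↥R → (↥G ⧸ H) := fun r =>
    QuotientGroup.mk ⟨(r : Equiv.Perm (Fin (4 * s))), RleG r.2⟩
  have hfinj : Function.Injective f := by
    intro r1 r2 hf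
    have hmem : (⟨(r1 : Equiv.Perm (Fin (4*s))), RleG r1.2⟩ : ↥G)⁻¹ *
        ⟨(r2 : Equiv.Perm (Fin (4*s))), RleG r2.2⟩ ∈ H := QuotientGroup.eq.1 hf
    rw [hHK, Subgroup.mem_subgroupOf] at hmem
    have hmem' : (r1 : Equiv.Perm (Fin (4*s)))⁻¹ * (r2 : Equiv.Perm (Fin (4*s)))
        ∈ Subgroup.map Φ' (K₀ s) := hmem
    have hpR : (r1 : Equiv.Perm (Fin (4*s)))⁻¹ * (r2 : Equiv.Perm (Fin (4*s))) ∈ R :=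
      mul_mem (inv_mem r1.2) r2.2
    obtain ⟨y, hy, hyeq⟩ := (le_of_eq hR2) hpR
    obtain ⟨z, hz, hzeq⟩ := hmem'
    have hzy : z = y := Φ_inj hs (by rw [hzeq, hyeq])
    have hy1 : y = 1 := R0_inter_K1 hs y (R'_le_R0 hs hy) (hzy ▸ K0_le_K1 hs hz)
    have hp1 : (r1 : Equiv.Perm (Fin (4*s)))⁻¹ * (r2 : Equiv.Perm (Fin (4*s))) = 1 := by
      rw [← hyeq, hy1, map_one]
    exact Subtype.ext (inv_mul_eq_one.1 hp1)
  have hfsurj : Function.Surjective f := by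
    intro q
    obtain ⟨x, rfl⟩ := QuotientGroup.mk_surjective q
    obtain ⟨wx, hwx, hwxeq⟩ := (le_of_eq hG') x.2
    obtain ⟨r0, hr0, u0, hu0, hdec⟩ := gen_RK hs wx hwx
    have hmemR : Φ' r0 ∈ R := by
      rw [hR2]
      exact Subgroup.mem_map_of_mem Φ' hr0
    refine ⟨⟨Φ' r0, hmemR⟩, ?_⟩
    show QuotientGroup.mk _ = QuotientGroup.mk x
    rw [QuotientGroup.eq, hHK, Subgroup.mem_subgroupOf]
    show (Φ' r0)⁻¹ * (x : Equiv.Perm (Fin (4*s))) ∈ Subgroup.map Φ' (K₀ s)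
    have hcomp : (Φ' r0)⁻¹ * (x : Equiv.Perm (Fin (4*s))) = Φ' (r0⁻¹ * wx) := by
      rw [map_mul, map_inv, hwxeq]
    rw [hcomp]
    apply Subgroup.mem_map_of_mem
    rw [hdec, inv_mul_cancel_left]
    exact hu0
  refine ⟨Equiv.ofBijective f ⟨hfinj, hfsurj⟩, ?_⟩
  intro r1 r2
  have hκG : Φ' (e0 s ((s:M) - 1)) ∈ G := by
    rw [hG']
    exact Subgroup.mem_map_of_mem Φ' (e0_mem_hg hs _)
  have hginG : g ∈ G := by rw [hG]; exact subset_closure (by simp)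
  have hhinG : h ∈ G := by rw [hG]; exact subset_closure (by simp)
  have hmemh : (⟨h, hhinG⟩ : ↥G) ∈ H := by
    rw [hHK, Subgroup.mem_subgroupOf]
    exact ⟨e0 s 0, e0_mem_K0 hs 0 (by rw [ZMod.val_zero]; omega),
      by rw [show e0 s 0 = h0 s from rfl]; exact hΦh⟩
  have hmemκ : (⟨Φ' (e0 s ((s:M) - 1)), hκG⟩ : ↥G) ∈ H := by
    rw [hHK, Subgroup.mem_subgroupOf]
    exact Subgroup.mem_map_of_mem Φ' (e0_mem_K0 hs _ (by rw [val_s_sub_one hs]; omega))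
  constructor
  · rintro (hcase | hcase)
    · refine ⟨⟨(r1 : Equiv.Perm (Fin (4*s))), RleG r1.2⟩,
        ⟨(r2 : Equiv.Perm (Fin (4*s))), RleG r2.2⟩, rfl, rfl,
        1, one_mem H, ⟨Φ' (e0 s ((s:M) - 1)), hκG⟩, hmemκ, ?_⟩
      apply Subtype.ext
      show (r1 : Equiv.Perm (Fin (4*s)))⁻¹ * (r2 : Equiv.Perm (Fin (4*s)))
        = (1 : Equiv.Perm (Fin (4*s))) * g' * Φ' (e0 s ((s:M) - 1))
      rw [hcase, one_mul, hg']
      have hx2 : Φ' (g0 s) * Φ' (e0 s ((s:M) - 1)) = h * g * a := by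
        rw [← map_mul, g0e0 hs, hΦba]
      rw [← hx2, hΦg]
    · refine ⟨⟨(r1 : Equiv.Perm (Fin (4*s))), RleG r1.2⟩,
        ⟨(r2 : Equiv.Perm (Fin (4*s))), RleG r2.2⟩, rfl, rfl,
        ⟨h, hhinG⟩, hmemh, 1, one_mem H, ?_⟩
      apply Subtype.ext
      show (r1 : Equiv.Perm (Fin (4*s)))⁻¹ * (r2 : Equiv.Perm (Fin (4*s)))
        = h * g' * (1 : Equiv.Perm (Fin (4*s)))
      rw [hcase, mul_one, hg']
  · rintro ⟨x, y, hx, hy, h₁, hh₁, h₂, hh₂, heq⟩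
    have hκ₁ : x⁻¹ * ⟨(r1 : Equiv.Perm (Fin (4*s))), RleG r1.2⟩ ∈ H :=
      QuotientGroup.eq.1 hx
    have hκ₂ : y⁻¹ * ⟨(r2 : Equiv.Perm (Fin (4*s))), RleG r2.2⟩ ∈ H :=
      QuotientGroup.eq.1 hy
    set r1G : ↥G := ⟨(r1 : Equiv.Perm (Fin (4*s))), RleG r1.2⟩ with hr1G
    set r2G : ↥G := ⟨(r2 : Equiv.Perm (Fin (4*s))), RleG r2.2⟩ with hr2G
    set κ₁ : ↥G := x⁻¹ * r1G with hκ₁def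
    set κ₂ : ↥G := y⁻¹ * r2G with hκ₂def
    have e3 : (r1G)⁻¹ * r2G = (κ₁⁻¹ * h₁) * g' * (h₂ * κ₂) := by
      rw [hκ₁def, hκ₂def]
      have : (x⁻¹ * r1G)⁻¹ * h₁ * g' * (h₂ * (y⁻¹ * r2G))
          = r1G⁻¹ * (x * (h₁ * g' * h₂) * y⁻¹) * r2G := by group
      rw [this, ← heq]
      group
    have hu : κ₁⁻¹ * h₁ ∈ H := mul_mem (inv_mem hκ₁) hh₁
    have hw : h₂ * κ₂ ∈ H := mul_mem hh₂ hκ₂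
    rw [hHK, Subgroup.mem_subgroupOf] at hu hw
    obtain ⟨cu, hcu, hcueq⟩ := hu
    obtain ⟨cw, hcw, hcweq⟩ := hw
    have hpR : (r1 : Equiv.Perm (Fin (4*s)))⁻¹ * (r2 : Equiv.Perm (Fin (4*s))) ∈ R :=
      mul_mem (inv_mem r1.2) r2.2
    obtain ⟨cr, hcr, hcreq⟩ := (le_of_eq hR2) hpR
    have hcueq' : Φ' cu = (κ₁ : Equiv.Perm (Fin (4*s)))⁻¹ * (h₁ : Equiv.Perm (Fin (4*s))) :=
      hcueq
    have hcweq' : Φ' cw = (h₂ : Equiv.Perm (Fin (4*s))) * (κ₂ : Equiv.Perm (Fin (4*s))) :=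
      hcweq
    have hperm : (r1 : Equiv.Perm (Fin (4*s)))⁻¹ * (r2 : Equiv.Perm (Fin (4*s)))
        = Φ' cu * g * Φ' cw := by
      rw [hcueq', hcweq', ← hg']
      exact congrArg (Subtype.val) e3
    have hcr_eq : cr = cu * g0 s * cw := by
      apply Φ_inj hs
      rw [hcreq, hperm, map_mul, map_mul, hΦg]
    have hdc := dc hs cr (R'_le_R0 hs hcr) cu cw (K0_le_K1 hs hcu) (K0_le_K1 hs hcw) hcr_eq
    rcases hdc with hcase | hcase
    · right
      rw [← hcreq, hcase, hΦb]
    · left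
      rw [← hcreq, hcase, hΦba]
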